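/- Let ι be a nonempty finite index set, let (Ω, 𝔽, P) be a probability space, let s : ι → ℝ be constants, and for each n ∈ ℕ and i ∈ ι let Ŝ_n(i) be a real random variable on Ω such that Ŝ_n(i) converges to s(i) in probability as n → ∞ for every i ∈ ι. Define the random argmax set Â_n = {i ∈ ι : Ŝ_n(j) ≤ Ŝ_n(i) for all j ∈ ι} and the deterministic argmax set A* = {i ∈ ι : s(j) ≤ s(i) for all j ∈ ι}. Then P(Â_n ⊆ A*) → 1 as n → ∞. Moreover, if A* = {i₀} is a singleton, then P(Â_n = {i₀}) → 1 as n → ∞. -/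

import Mathlib

open MeasureTheory Filter

/-- Argmax consistency: if for each `i` in a nonempty finite index set the random
variables `S n i` converge in probability to the constant `s i`, then with probability
tending to one the random argmax set is contained in the deterministic argmax set;
moreover, if the deterministic argmax set is a singleton `{i₀}`, then with probability
tending to one the random argmax set equals `{i₀}`. -/
theorem argmax_consistency
    {Ω : Type*} [MeasurableSpace Ω] (μ : Measure Ω) [IsProbabilityMeasure μ]
    {ι : Type*} [Fintype ι] [Nonempty ι]
    (S : ℕ → ι → Ω → ℝ) (s : ι → ℝ)
    (hmeas : ∀ n i, Measurable (S n i))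
    (hconv : ∀ i, ∀ ε > (0 : ℝ),
      Tendsto (fun n => μ {ω | ε < |S n i ω - s i|}) atTop (nhds 0)) :
    Tendsto (fun n =>
        μ {ω | {i | ∀ j, S n j ω ≤ S n i ω} ⊆ {i | ∀ j, s j ≤ s i}}) atTop (nhds 1) ∧
      ∀ i₀ : ι, {i | ∀ j, s j ≤ s i} = {i₀} →
        Tendsto (fun n =>
          μ {ω | {i | ∀ j, S n j ω ≤ S n i ω} = {i₀}}) atTop (nhds 1) := by
  have hmain : Tendsto (fun n =>
      μ {ω | {i | ∀ j, S n j ω ≤ S n i ω} ⊆ {i | ∀ j, s j ≤ s i}}) atTop (nhds 1) := by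
    by_cases hall : ∀ i j : ι, s j ≤ s i
    · have huniv : ∀ n, {ω : Ω | {i | ∀ j, S n j ω ≤ S n i ω} ⊆ {i | ∀ j, s j ≤ s i}}
          = Set.univ := by
        intro n; ext ω
        simp only [Set.mem_setOf_eq, Set.mem_univ, iff_true]
        intro i _ j; exact hall i j
      simp only [huniv, measure_univ]; exact tendsto_const_nhds
    · push_neg at hall
      obtain ⟨i₁, j₁, hlt⟩ := hall
      obtain ⟨j₀, hj₀⟩ := Finite.exists_max s
      set B : Finset ι := Finset.univ.filter (fun i => s i < s j₀) with hBdef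
      have hB : B.Nonempty := ⟨i₁, by simp [hBdef, lt_of_lt_of_le hlt (hj₀ j₁)]⟩
      set δ : ℝ := B.inf' hB (fun i => s j₀ - s i) with hδdef
      have hδpos : 0 < δ := by
        rw [hδdef, Finset.lt_inf'_iff]
        intro i hi
        rw [hBdef, Finset.mem_filter] at hi
        linarith [hi.2]
      set ε : ℝ := δ / 3 with hεdef
      have hεpos : 0 < ε := by positivity
      -- lower bound
      have hlow : ∀ n, 1 - ∑ i, μ {ω | ε < |S n i ω - s i|}
          ≤ μ {ω | {i | ∀ j, S n j ω ≤ S n i ω} ⊆ {i | ∀ j, s j ≤ s i}} := by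
        intro n
        set G : Set Ω := {ω | ∀ i, |S n i ω - s i| ≤ ε} with hGdef
        have hGsub : G ⊆ {ω | {i | ∀ j, S n j ω ≤ S n i ω} ⊆ {i | ∀ j, s j ≤ s i}} := by
          intro ω hω i hi j
          simp only [Set.mem_setOf_eq] at hi hω ⊢
          have h0 : s j₀ ≤ s i := by
            by_contra hc
            push_neg at hc
            have hiB : i ∈ B := by simp [hBdef, hc]
            have hδle : δ ≤ s j₀ - s i := Finset.inf'_le _ hiB
            have h1 := hω j₀
            have h2 := hω i
            have h3 := hi j₀
            rw [abs_le] at h1 h2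
            have : s j₀ - s i ≤ 2 * ε := by linarith [h1.1, h2.2]
            rw [hεdef] at this
            linarith
          exact le_trans (hj₀ j) h0
        have hcomp : Gᶜ ⊆ ⋃ i, {ω | ε < |S n i ω - s i|} := by
          intro ω hω
          simp only [hGdef, Set.mem_compl_iff, Set.mem_setOf_eq, not_forall, not_le] at hω
          obtain ⟨i, hi⟩ := hω
          exact Set.mem_iUnion.2 ⟨i, hi⟩
        have hGc : μ Gᶜ ≤ ∑ i, μ {ω | ε < |S n i ω - s i|} := by
          calc μ Gᶜ ≤ μ (⋃ i, {ω | ε < |S n i ω - s i|}) := measure_mono hcomp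
            _ ≤ ∑' i, μ {ω | ε < |S n i ω - s i|} := measure_iUnion_le _
            _ = ∑ i, μ {ω | ε < |S n i ω - s i|} := tsum_fintype _
        have hone : (1 : ENNReal) ≤ μ G + μ Gᶜ := by
          calc (1 : ENNReal) = μ Set.univ := (measure_univ).symm
            _ = μ (G ∪ Gᶜ) := by rw [Set.union_compl_self]
            _ ≤ μ G + μ Gᶜ := measure_union_le _ _
        have h1G : 1 - ∑ i, μ {ω | ε < |S n i ω - s i|} ≤ μ G := by
          rw [tsub_le_iff_right]
          exact le_trans hone (add_le_add (le_refl _) hGc)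
        exact le_trans h1G (measure_mono hGsub)
      have hsum : Tendsto (fun n => ∑ i, μ {ω | ε < |S n i ω - s i|}) atTop (nhds 0) := by
        have := tendsto_finset_sum (Finset.univ : Finset ι)
          (fun i _ => hconv i ε hεpos)
        simpa using this
      have hlowlim : Tendsto (fun n => 1 - ∑ i, μ {ω | ε < |S n i ω - s i|})
          atTop (nhds 1) := by
        have := ENNReal.Tendsto.sub (tendsto_const_nhds (x := (1 : ENNReal)))
          hsum (Or.inl ENNReal.one_ne_top)
        simpa using this
      exact tendsto_of_tendsto_of_tendsto_of_le_of_le hlowlim tendsto_const_nhds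
        hlow (fun n => prob_le_one)
  refine ⟨hmain, ?_⟩
  intro i₀ hA
  have heq : ∀ n, {ω : Ω | {i | ∀ j, S n j ω ≤ S n i ω} = {i₀}}
      = {ω | {i | ∀ j, S n j ω ≤ S n i ω} ⊆ {i | ∀ j, s j ≤ s i}} := by
    intro n; ext ω
    simp only [Set.mem_setOf_eq, hA]
    constructor
    · intro h; rw [h]
    · intro h
      obtain ⟨i, hi⟩ := Finite.exists_max (fun i => S n i ω)
      have hne : ({i | ∀ j, S n j ω ≤ S n i ω} : Set ι).Nonempty := ⟨i, hi⟩
      exact (Set.Nonempty.subset_singleton_iff hne).1 h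
  simp only [heq]
  exact hmain
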